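/- Let k ≥ 3 and let n be a positive integer with gcd(n, 2) = 1. Then every total dominating set of the proper enhanced power graph of Z_n × Q_{2^k} has at least 2^{k-2} + 1 elements, i.e., γ^strong(G_E**(Z_n × Q_{2^k})) ≥ 2^{k-2} + 1. -/

import Mathlib

open SimpleGraph

/-- The enhanced power graph of a group `G`: distinct `x, y` are adjacent iff
both lie in a common cyclic subgroup `⟨w⟩`. -/
def enhancedPowerGraph (G : Type*) [Group G] : SimpleGraph G where
  Adj x y := x ≠ y ∧ ∃ w : G, x ∈ Subgroup.zpowers w ∧ y ∈ Subgroup.zpowers w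
  symm := by
    constructor
    rintro x y ⟨hxy, w, hx, hy⟩
    exact ⟨hxy.symm, w, hy, hx⟩
  loopless := by
    constructor
    rintro x ⟨hxx, -⟩
    exact hxx rfl

/-- The set of dominating vertices of a graph: vertices adjacent to every other vertex. -/
def SimpleGraph.domVerts {V : Type*} (Γ : SimpleGraph V) : Set V :=
  {v | ∀ u, u ≠ v → Γ.Adj v u}

/-- The proper enhanced power graph: the enhanced power graph induced on the complement of
its set of dominating vertices. -/
def properEnhancedPowerGraph (G : Type*) [Group G] :
    SimpleGraph ((enhancedPowerGraph G).domVertsᶜ : Set G) :=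
  SimpleGraph.induce ((enhancedPowerGraph G).domVertsᶜ) (enhancedPowerGraph G)

/-- A total (strongly) dominating set: every vertex has a neighbor in `D`. -/
def SimpleGraph.IsTotalDominatingSet {V : Type*} (Γ : SimpleGraph V) (D : Set V) : Prop :=
  ∀ v : V, ∃ u ∈ D, Γ.Adj v u

/-- The strong domination number: minimum size of a total dominating set. -/
noncomputable def SimpleGraph.strongDominationNumber {V : Type*} (Γ : SimpleGraph V) : ℕ :=
  sInf {n : ℕ | ∃ D : Set V, Γ.IsTotalDominatingSet D ∧ D.ncard = n}

/-- A dominating set: every vertex not in `D` has a neighbor in `D`. -/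
def SimpleGraph.IsDominatingSet {V : Type*} (Γ : SimpleGraph V) (D : Set V) : Prop :=
  ∀ v ∉ D, ∃ u ∈ D, Γ.Adj v u

/-- The domination number: minimum size of a dominating set. -/
noncomputable def SimpleGraph.dominationNumber {V : Type*} (Γ : SimpleGraph V) : ℕ :=
  sInf {n : ℕ | ∃ D : Set V, Γ.IsDominatingSet D ∧ D.ncard = n}

/-- `G` is a generalized quaternion group `Q_{2^k}` for some `k ≥ 3`. -/
def IsGeneralizedQuaternion (G : Type*) [Group G] : Prop :=
  ∃ k : ℕ, 3 ≤ k ∧ Nonempty (G ≃* QuaternionGroup (2 ^ (k - 2)))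

/-- The number of subgroups of `G` of order `p`. -/
noncomputable def numSubgroupsOfOrder (G : Type*) [Group G] (p : ℕ) : ℕ :=
  Nat.card {H : Subgroup G // Nat.card H = p}

section AuxLemmas

open QuaternionGroup Subgroup

lemma mem_powers_of_mem_zpowers' {G : Type*} [Group G] [Finite G] {g x : G}
    (h : x ∈ Subgroup.zpowers g) : ∃ t : ℕ, g ^ t = x :=
  (Submonoid.mem_powers_iff _ _).mp ((isOfFinOrder_of_finite g).mem_powers_iff_mem_zpowers.mpr h)

/-- CRT: joint membership in zpowers of a pair. -/
lemma crt_mem_zpowers_prod {A B : Type*} [Group A] [Group B] [Finite A] [Finite B]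
    {g c : A} {h u : B}
    (hco : Nat.Coprime (orderOf g) (orderOf h))
    (hc : c ∈ Subgroup.zpowers g) (hu : u ∈ Subgroup.zpowers h) :
    (c, u) ∈ Subgroup.zpowers ((g, h) : A × B) := by
  obtain ⟨s, rfl⟩ := mem_powers_of_mem_zpowers' hc
  obtain ⟨t, rfl⟩ := mem_powers_of_mem_zpowers' hu
  obtain ⟨r, hr1, hr2⟩ := Nat.chineseRemainder hco s t
  refine Subgroup.mem_zpowers_iff.mpr ⟨(r : ℤ), ?_⟩
  rw [zpow_natCast]
  have h1 : g ^ r = g ^ s := pow_eq_pow_iff_modEq.mpr hr1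
  have h2 : h ^ r = h ^ t := pow_eq_pow_iff_modEq.mpr hr2
  simp [Prod.pow_def, h1, h2]

lemma snd_mem_zpowers {A B : Type*} [Group A] [Group B] {w x : A × B}
    (h : x ∈ Subgroup.zpowers w) : x.2 ∈ Subgroup.zpowers w.2 := by
  obtain ⟨z, hz⟩ := Subgroup.mem_zpowers_iff.mp h
  exact Subgroup.mem_zpowers_iff.mpr ⟨z, by rw [← hz]; rfl⟩

lemma a_pow_rot {m : ℕ} (j : ZMod (2 * m)) (t : ℕ) :
    ∃ s, (QuaternionGroup.a j : QuaternionGroup m) ^ t = a s := by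
  induction t with
  | zero => exact ⟨0, by rw [pow_zero, one_def]⟩
  | succ t ih =>
    obtain ⟨s, hs⟩ := ih
    exact ⟨s + j, by rw [pow_succ, hs, a_mul_a]⟩

lemma rot_of_mem_zpowers_a {m : ℕ} [NeZero m] {j : ZMod (2 * m)} {u : QuaternionGroup m}
    (hu : u ∈ Subgroup.zpowers (QuaternionGroup.a j)) :
    ∃ s, u = QuaternionGroup.a s := by
  obtain ⟨t, ht⟩ := mem_powers_of_mem_zpowers' hu
  obtain ⟨s, hs⟩ := a_pow_rot j t
  exact ⟨s, by rw [← ht, hs]⟩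

lemma neg_m_eq {m : ℕ} : -(m : ZMod (2 * m)) = (m : ZMod (2 * m)) := by
  have h : (m : ZMod (2 * m)) + m = 0 := by
    rw [← Nat.cast_add, ← two_mul, ZMod.natCast_self]
  exact neg_eq_of_add_eq_zero_left h

lemma xa_pow_cases {m : ℕ} [NeZero m] (j : ZMod (2 * m)) (t : ℕ) :
    xa j ^ t = 1 ∨ xa j ^ t = a (m : ZMod (2 * m)) ∨ xa j ^ t = xa j ∨
      xa j ^ t = xa (j + (m : ZMod (2 * m))) := by
  have h4 : xa j ^ t = xa j ^ (t % 4) := by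
    rw [← orderOf_xa (n := m) j, pow_mod_orderOf]
  have hlt : t % 4 < 4 := Nat.mod_lt _ (by norm_num)
  interval_cases h : t % 4 <;> rw [h4]
  · left; exact pow_zero _
  · right; right; left; exact pow_one _
  · right; left; exact xa_sq j
  · right; right; right
    rw [show (3:ℕ) = 2 + 1 by rfl, pow_succ, xa_sq, a_mul_xa, sub_eq_add_neg, neg_m_eq]

lemma mem_zpowers_with_xa {m : ℕ} [NeZero m] {i : ZMod (2 * m)} {q u : QuaternionGroup m}
    (hx : xa i ∈ Subgroup.zpowers q) (hu : u ∈ Subgroup.zpowers q) :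
    u = 1 ∨ u = a (m : ZMod (2 * m)) ∨ u = xa i ∨ u = xa (i + (m : ZMod (2 * m))) := by
  have hmm : ∀ w : ZMod (2 * m), w + m + m = w := by
    intro w
    rw [add_assoc, ← Nat.cast_add, ← two_mul, ZMod.natCast_self, add_zero]
  cases q with
  | a j =>
    obtain ⟨s, hs⟩ := rot_of_mem_zpowers_a hx
    exact absurd hs (by simp)
  | xa j =>
    obtain ⟨t, ht⟩ := mem_powers_of_mem_zpowers' hx
    obtain ⟨s, rfl⟩ := mem_powers_of_mem_zpowers' hu
    have hij : i = j ∨ i = j + m := by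
      rcases xa_pow_cases j t with h | h | h | h <;> rw [ht] at h
      · exact absurd h (by rw [one_def]; intro h'; cases h')
      · exact absurd h (by simp)
      · left; exact xa.inj h
      · right; exact xa.inj h
    rcases xa_pow_cases j s with h | h | h | h
    · exact Or.inl h
    · exact Or.inr (Or.inl h)
    · rcases hij with rfl | rfl
      · exact Or.inr (Or.inr (Or.inl h))
      · exact Or.inr (Or.inr (Or.inr (by rw [h, hmm j])))
    · rcases hij with rfl | rfl
      · exact Or.inr (Or.inr (Or.inr h))
      · exact Or.inr (Or.inr (Or.inl h))

lemma natcast_zmod_eq {M a b : ℕ} (ha : a < M) (hb : b < M)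
    (h : (a : ZMod M) = (b : ZMod M)) : a = b := by
  have := (ZMod.natCast_eq_natCast_iff' a b M).mp h
  rwa [Nat.mod_eq_of_lt ha, Nat.mod_eq_of_lt hb] at this

lemma zmod_gen {n : ℕ} [NeZero n] (c : Multiplicative (ZMod n)) :
    c ∈ Subgroup.zpowers (Multiplicative.ofAdd (1 : ZMod n)) := by
  refine Subgroup.mem_zpowers_iff.mpr ⟨(((Multiplicative.toAdd c).val : ℕ) : ℤ), ?_⟩
  rw [zpow_natCast, ← ofAdd_nsmul, Nat.smul_one_eq_cast, ZMod.natCast_zmod_val, ofAdd_toAdd]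

lemma central_dom {n m e : ℕ} [NeZero n] (hn : Nat.Coprime n 2) (he : m = 2 ^ e)
    (c : Multiplicative (ZMod n)) {t : QuaternionGroup m}
    (ht : t = 1 ∨ t = a (m : ZMod (2 * m))) :
    (c, t) ∈ (enhancedPowerGraph (Multiplicative (ZMod n) × QuaternionGroup m)).domVerts := by
  haveI : NeZero m := ⟨by rw [he]; positivity⟩
  rintro ⟨d, q⟩ hu
  refine ⟨hu.symm, ?_⟩
  obtain ⟨q', hq't, hq'q⟩ : ∃ q' : QuaternionGroup m,
      t ∈ Subgroup.zpowers q' ∧ q ∈ Subgroup.zpowers q' := by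
    rcases ht with rfl | rfl
    · exact ⟨q, one_mem _, Subgroup.mem_zpowers q⟩
    · cases q with
      | a j =>
        refine ⟨a 1, ?_, ?_⟩
        · have := pow_mem (Subgroup.mem_zpowers (a 1 : QuaternionGroup m)) m
          rwa [a_one_pow] at this
        · have := pow_mem (Subgroup.mem_zpowers (a 1 : QuaternionGroup m)) j.val
          rwa [a_one_pow, ZMod.natCast_zmod_val] at this
      | xa j =>
        refine ⟨xa j, ?_, Subgroup.mem_zpowers _⟩
        have := pow_mem (Subgroup.mem_zpowers (xa j : QuaternionGroup m)) 2
        rwa [xa_sq] at this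
  have hcop : Nat.Coprime (orderOf (Multiplicative.ofAdd (1 : ZMod n))) (orderOf q') := by
    rw [orderOf_ofAdd_eq_addOrderOf, ZMod.addOrderOf_one]
    have hdvd : orderOf q' ∣ 2 ^ (e + 2) := by
      have h1 : orderOf q' ∣ Fintype.card (QuaternionGroup m) := orderOf_dvd_card
      rw [QuaternionGroup.card] at h1
      exact h1.trans (dvd_of_eq (by rw [he]; ring))
    exact Nat.Coprime.coprime_dvd_right hdvd (hn.pow_right _)
  exact ⟨(Multiplicative.ofAdd (1 : ZMod n), q'),
    crt_mem_zpowers_prod hcop (zmod_gen c) hq't,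
    crt_mem_zpowers_prod hcop (zmod_gen d) hq'q⟩

lemma xa_not_dom {n m : ℕ} [NeZero n] [NeZero m] (hm2 : 2 ≤ m)
    (c : Multiplicative (ZMod n)) (i : ZMod (2 * m)) :
    ((c, xa i) : Multiplicative (ZMod n) × QuaternionGroup m) ∉
      (enhancedPowerGraph (Multiplicative (ZMod n) × QuaternionGroup m)).domVerts := by
  intro hdom
  obtain ⟨-, w, h1, h2⟩ := hdom (c, a 1) (by simp [Prod.ext_iff])
  have hx := snd_mem_zpowers h1
  have ha := snd_mem_zpowers h2
  rcases mem_zpowers_with_xa hx ha with h | h | h | h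
  · rw [one_def] at h
    have h' : ((1 : ℕ) : ZMod (2 * m)) = ((0 : ℕ) : ZMod (2 * m)) := by
      exact_mod_cast QuaternionGroup.a.inj h
    have := natcast_zmod_eq (by omega) (by omega) h'
    omega
  · have h' : ((1 : ℕ) : ZMod (2 * m)) = ((m : ℕ) : ZMod (2 * m)) := by
      exact_mod_cast QuaternionGroup.a.inj h
    have := natcast_zmod_eq (by omega) (by omega) h'
    omega
  · exact absurd h (by simp)
  · exact absurd h (by simp)

lemma a_one_mem_xa_zpowers_false {m : ℕ} [NeZero m] (hm2 : 2 ≤ m) {j : ZMod (2 * m)}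
    (h : (a 1 : QuaternionGroup m) ∈ Subgroup.zpowers (xa j)) : False := by
  rcases mem_zpowers_with_xa (Subgroup.mem_zpowers (xa j)) h with h' | h' | h' | h'
  · rw [one_def] at h'
    have h'' : ((1 : ℕ) : ZMod (2 * m)) = ((0 : ℕ) : ZMod (2 * m)) := by
      exact_mod_cast QuaternionGroup.a.inj h'
    have := natcast_zmod_eq (by omega) (by omega) h''
    omega
  · have h'' : ((1 : ℕ) : ZMod (2 * m)) = ((m : ℕ) : ZMod (2 * m)) := by
      exact_mod_cast QuaternionGroup.a.inj h'
    have := natcast_zmod_eq (by omega) (by omega) h''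
    omega
  · exact absurd h' (by simp)
  · exact absurd h' (by simp)

lemma a_one_not_dom {n m : ℕ} [NeZero n] [NeZero m] (hm2 : 2 ≤ m)
    (c : Multiplicative (ZMod n)) :
    ((c, a (1 : ZMod (2 * m))) : Multiplicative (ZMod n) × QuaternionGroup m) ∉
      (enhancedPowerGraph (Multiplicative (ZMod n) × QuaternionGroup m)).domVerts := by
  intro hdom
  obtain ⟨-, w, h1, h2⟩ := hdom (c, xa 0) (by simp [Prod.ext_iff])
  have ha := snd_mem_zpowers h1
  have hx := snd_mem_zpowers h2
  cases hw : w.2 with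
  | a j =>
    rw [hw] at hx
    obtain ⟨s, hs⟩ := rot_of_mem_zpowers_a hx
    exact absurd hs (by simp)
  | xa j =>
    rw [hw] at ha
    exact a_one_mem_xa_zpowers_false hm2 ha

end AuxLemmas

section MainArgument

open QuaternionGroup

lemma main_bound {n m e : ℕ} [NeZero n] (hn : Nat.Coprime n 2) (he : m = 2 ^ e) (he1 : 1 ≤ e) :
    ∀ D : Set ((enhancedPowerGraph (Multiplicative (ZMod n) × QuaternionGroup m)).domVertsᶜ :
        Set (Multiplicative (ZMod n) × QuaternionGroup m)),
      (properEnhancedPowerGraph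
          (Multiplicative (ZMod n) × QuaternionGroup m)).IsTotalDominatingSet D →
        m + 1 ≤ D.ncard := by
  haveI : NeZero m := ⟨by rw [he]; positivity⟩
  have hm2 : 2 ≤ m := by
    rw [he]
    calc 2 = 2 ^ 1 := (pow_one 2).symm
    _ ≤ 2 ^ e := Nat.pow_le_pow_right (by norm_num) he1
  intro D hD
  set G := Multiplicative (ZMod n) × QuaternionGroup m with hG
  have hvmem : ∀ z : ZMod (2 * m),
      ((1, xa z) : G) ∈ (enhancedPowerGraph G).domVertsᶜ :=
    fun z => xa_not_dom hm2 1 z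
  have hamem : ((1, a (1 : ZMod (2 * m))) : G) ∈ (enhancedPowerGraph G).domVertsᶜ :=
    a_one_not_dom hm2 1
  have key : ∀ i : Fin m, ∃ u : ((enhancedPowerGraph G).domVertsᶜ : Set G), u ∈ D ∧
      ((u : G).2 = xa ((i : ℕ) : ZMod (2 * m)) ∨
        (u : G).2 = xa (((i : ℕ) : ZMod (2 * m)) + (m : ZMod (2 * m)))) := by
    intro i
    obtain ⟨u, huD, hadj⟩ := hD ⟨(1, xa ((i : ℕ) : ZMod (2 * m))), hvmem _⟩
    refine ⟨u, huD, ?_⟩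
    obtain ⟨hne, w, h1, h2⟩ := hadj
    have hx : xa ((i : ℕ) : ZMod (2 * m)) ∈ Subgroup.zpowers w.2 := snd_mem_zpowers h1
    have hu2 := snd_mem_zpowers h2
    rcases mem_zpowers_with_xa hx hu2 with h | h | h | h
    · exfalso
      refine u.2 ?_
      have hrw : (u : G) = ((u : G).1, (1 : QuaternionGroup m)) := Prod.ext rfl h
      rw [hrw]
      exact central_dom hn he _ (Or.inl rfl)
    · exfalso
      refine u.2 ?_
      have hrw : (u : G) = ((u : G).1, a ((m : ℕ) : ZMod (2 * m))) := Prod.ext rfl h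
      rw [hrw]
      exact central_dom hn he _ (Or.inr rfl)
    · exact Or.inl h
    · exact Or.inr h
  choose uf huf1 huf2 using key
  obtain ⟨ua, huaD, s, hs⟩ : ∃ u, u ∈ D ∧ ∃ s, (u : G).2 = a s := by
    obtain ⟨u, huD, hadj⟩ := hD ⟨(1, a (1 : ZMod (2 * m))), hamem⟩
    obtain ⟨hne, w, h1, h2⟩ := hadj
    have ha1 : (a (1 : ZMod (2 * m)) : QuaternionGroup m) ∈ Subgroup.zpowers w.2 :=
      snd_mem_zpowers h1
    have hu2 := snd_mem_zpowers h2
    refine ⟨u, huD, ?_⟩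
    cases hw : w.2 with
    | a j =>
      rw [hw] at hu2
      obtain ⟨s, hs⟩ := rot_of_mem_zpowers_a hu2
      exact ⟨s, hs⟩
    | xa j =>
      rw [hw] at ha1
      exact absurd ha1 (fun hh => a_one_mem_xa_zpowers_false hm2 hh)
  classical
  have hinj : ∃ F : Fin (m + 1) → {x // x ∈ D}, Function.Injective F := by
    refine ⟨fun i => if h : (i : ℕ) < m then ⟨uf ⟨(i : ℕ), h⟩, huf1 _⟩ else ⟨ua, huaD⟩, ?_⟩
    intro i j hij
    by_cases hi : (i : ℕ) < m <;> by_cases hj : (j : ℕ) < m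
    · simp only [dif_pos hi, dif_pos hj, Subtype.mk.injEq] at hij
      have hval : uf ⟨(i : ℕ), hi⟩ = uf ⟨(j : ℕ), hj⟩ := hij
      have hsnd : (uf ⟨(i : ℕ), hi⟩ : G).2 = (uf ⟨(j : ℕ), hj⟩ : G).2 := by rw [hval]
      have hieq : (i : ℕ) = (j : ℕ) := by
        rcases huf2 ⟨(i : ℕ), hi⟩ with hA | hA <;> rcases huf2 ⟨(j : ℕ), hj⟩ with hB | hB <;>
            rw [hA, hB] at hsnd
        · have h' : (((i : ℕ) : ℕ) : ZMod (2 * m)) = (((j : ℕ) : ℕ) : ZMod (2 * m)) := by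
            exact_mod_cast QuaternionGroup.xa.inj hsnd
          exact natcast_zmod_eq (by omega) (by omega) h'
        · have h0 := QuaternionGroup.xa.inj hsnd
          have h' : (((i : ℕ) : ℕ) : ZMod (2 * m)) = (((j : ℕ) + m : ℕ) : ZMod (2 * m)) := by
            push_cast
            exact_mod_cast h0
          have := natcast_zmod_eq (by omega) (by omega) h'
          omega
        · have h0 := QuaternionGroup.xa.inj hsnd
          have h' : (((i : ℕ) + m : ℕ) : ZMod (2 * m)) = (((j : ℕ) : ℕ) : ZMod (2 * m)) := by
            push_cast
            exact_mod_cast h0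
          have := natcast_zmod_eq (by omega) (by omega) h'
          omega
        · have h0 := QuaternionGroup.xa.inj hsnd
          have h' : (((i : ℕ) + m : ℕ) : ZMod (2 * m)) = (((j : ℕ) + m : ℕ) : ZMod (2 * m)) := by
            push_cast
            exact_mod_cast h0
          have := natcast_zmod_eq (by omega) (by omega) h'
          omega
      exact Fin.ext hieq
    · exfalso
      simp only [dif_pos hi, dif_neg hj, Subtype.mk.injEq] at hij
      have hval : uf ⟨(i : ℕ), hi⟩ = ua := hij
      have hsnd : (uf ⟨(i : ℕ), hi⟩ : G).2 = a s := by rw [hval, hs]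
      rcases huf2 ⟨(i : ℕ), hi⟩ with hA | hA <;> rw [hA] at hsnd <;> exact absurd hsnd (by simp)
    · exfalso
      simp only [dif_neg hi, dif_pos hj, Subtype.mk.injEq] at hij
      have hval : ua = uf ⟨(j : ℕ), hj⟩ := hij
      have hsnd : (uf ⟨(j : ℕ), hj⟩ : G).2 = a s := by rw [← hval, hs]
      rcases huf2 ⟨(j : ℕ), hj⟩ with hA | hA <;> rw [hA] at hsnd <;> exact absurd hsnd (by simp)
    · have h1 := i.isLt
      have h2 := j.isLt
      exact Fin.ext (by omega)
  obtain ⟨F, hF⟩ := hinj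
  have hcard := Nat.card_le_card_of_injective F hF
  rw [Nat.card_eq_fintype_card, Fintype.card_fin, Nat.card_coe_set_eq] at hcard
  exact hcard

end MainArgument

/-- For `k ≥ 3` and `n` with `gcd(n, 2) = 1`, every total dominating set of
`G_E**(ℤ_n × Q_{2^k})` has at least `2^{k-2} + 1` elements. -/
theorem stmt_15 (k : ℕ) (hk : 3 ≤ k) (n : ℕ) [NeZero n] (hn : Nat.Coprime n 2) :
    ∀ D : Set ((enhancedPowerGraph
        (Multiplicative (ZMod n) × QuaternionGroup (2 ^ (k - 2)))).domVertsᶜ :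
          Set (Multiplicative (ZMod n) × QuaternionGroup (2 ^ (k - 2)))),
      (properEnhancedPowerGraph
          (Multiplicative (ZMod n) × QuaternionGroup (2 ^ (k - 2)))).IsTotalDominatingSet D →
        2 ^ (k - 2) + 1 ≤ D.ncard := by
  exact main_bound (e := k - 2) hn rfl (by omega)
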